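/- arXiv:2109.04042 — 2 statements merged into one kernel-verified Lean document; each statement's English description precedes it below -/
import Mathlib

section
/- Let X ~ Hypergeometric(N, K, n) and let 0 < t < K/N. Then Pr[X ≤ (K/N − t)·n] ≤ exp(−2t²n). -/
open Finset Real

section HypergeomAux


lemma bern_pos (p : ℝ) (hp0 : 0 ≤ p) (hp1 : p ≤ 1) (s : ℝ) :
    0 < 1 - p + p * Real.exp s := by
  rcases le_total (Real.exp s) 1 with h | h
  · nlinarith [Real.exp_pos s]
  · nlinarith [Real.exp_pos s]

lemma bern_hoeffding (p : ℝ) (hp0 : 0 ≤ p) (hp1 : p ≤ 1) (s : ℝ) :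
    1 - p + p * Real.exp s ≤ Real.exp (p * s + s ^ 2 / 8) := by
  have hD := bern_pos p hp0 hp1
  set D : ℝ → ℝ := fun x => 1 - p + p * Real.exp x with hDdef
  set φ : ℝ → ℝ := fun x => p + x / 4 - p * Real.exp x / D x with hφdef
  set h : ℝ → ℝ := fun x => p * x + x ^ 2 / 8 - Real.log (D x) with hhdef
  have hDx : ∀ x, HasDerivAt D (p * Real.exp x) x := fun x =>
    ((Real.hasDerivAt_exp x).const_mul p).const_add (1 - p)
  have hφx : ∀ x, HasDerivAt φ (1 / 4 - p * Real.exp x * (1 - p) / (D x) ^ 2) x := by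
    intro x
    have h1 : HasDerivAt (fun x : ℝ => p + x / 4) (1 / 4) x := by
      simpa using ((hasDerivAt_id x).div_const 4).const_add p
    have h2 : HasDerivAt (fun x => p * Real.exp x / D x)
        ((p * Real.exp x * D x - p * Real.exp x * (p * Real.exp x)) / (D x) ^ 2) x :=
      ((Real.hasDerivAt_exp x).const_mul p).div (hDx x) (hD x).ne'
    have : p * Real.exp x * D x - p * Real.exp x * (p * Real.exp x)
        = p * Real.exp x * (1 - p) := by simp only [hDdef]; ring
    rw [this] at h2
    exact h1.sub h2
  have hhx : ∀ x, HasDerivAt h (φ x) x := by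
    intro x
    have h2 : HasDerivAt (fun x : ℝ => p * x) p x := by
      simpa using (hasDerivAt_id x).const_mul p
    have h1 : HasDerivAt (fun x : ℝ => p * x + x ^ 2 / 8) (p + x / 4) x := by
      exact (h2.add ((hasDerivAt_pow 2 x).div_const 8)).congr_deriv
        (by rw [show (2:ℕ) - 1 = 1 from rfl]; push_cast; ring)
    have h3 : HasDerivAt (fun x => Real.log (D x)) (p * Real.exp x / D x) x :=
      (hDx x).log (hD x).ne'
    exact h1.sub h3
  -- φ is monotone
  have hφmono : Monotone φ := by
    apply monotone_of_deriv_nonneg (fun x => (hφx x).differentiableAt)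
    intro x
    rw [(hφx x).deriv]
    have hE := Real.exp_pos x
    have key : p * Real.exp x * (1 - p) ≤ (D x) ^ 2 / 4 := by
      have : D x = (1 - p) + p * Real.exp x := rfl
      nlinarith [sq_nonneg (p * Real.exp x - (1 - p))]
    have hD2 : (0:ℝ) < (D x) ^ 2 := pow_pos (hD x) 2
    rw [sub_nonneg, div_le_iff₀ hD2]
    linarith
  have hφ0 : φ 0 = 0 := by
    simp only [hφdef, hDdef]
    rw [Real.exp_zero]
    field_simp
    ring
  have hh0 : h 0 = 0 := by
    simp only [hhdef, hDdef]
    rw [Real.exp_zero]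
    norm_num
  -- h s ≥ 0
  have hhs : 0 ≤ h s := by
    rcases le_total 0 s with hs | hs
    · have hmono : MonotoneOn h (Set.Ici 0) := by
        apply monotoneOn_of_deriv_nonneg (convex_Ici 0)
          (fun x _ => (hhx x).differentiableAt.continuousAt.continuousWithinAt)
          (fun x _ => (hhx x).differentiableAt.differentiableWithinAt)
        intro x hx
        rw [(hhx x).deriv, ← hφ0]
        exact hφmono (le_of_lt (by simpa using hx))
      have := hmono (Set.self_mem_Ici) (Set.mem_Ici.2 hs) hs
      linarith [hh0 ▸ this]
    · have hanti : AntitoneOn h (Set.Iic 0) := by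
        apply antitoneOn_of_deriv_nonpos (convex_Iic 0)
          (fun x _ => (hhx x).differentiableAt.continuousAt.continuousWithinAt)
          (fun x _ => (hhx x).differentiableAt.differentiableWithinAt)
        intro x hx
        rw [(hhx x).deriv, ← hφ0]
        exact hφmono (le_of_lt (by simpa using hx))
      have := hanti (Set.mem_Iic.2 hs) (Set.self_mem_Iic) hs
      linarith [hh0 ▸ this]
  have : Real.log (D s) ≤ p * s + s ^ 2 / 8 := by
    simp only [hhdef] at hhs; linarith
  calc D s ≤ Real.exp (Real.log (D s)) := by rw [Real.exp_log (hD s)]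
    _ ≤ _ := Real.exp_le_exp.2 this


-- Lemma B: C(K,j) * N^j ≤ C(N,j) * K^j
lemma descFact_ineq (K N : ℕ) (hK : K ≤ N) :
    ∀ j, K.descFactorial j * N ^ j ≤ N.descFactorial j * K ^ j := by
  intro j
  induction j with
  | zero => simp
  | succ j ih =>
    rw [Nat.descFactorial_succ, Nat.descFactorial_succ, pow_succ, pow_succ]
    have h1 : (K - j) * N ≤ (N - j) * K := by
      rcases le_total j K with hj | hj
      · have : j ≤ N := hj.trans hK
        zify [hj, this]
        have h1 : (K:ℤ) ≤ N := by exact_mod_cast hK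
        have h2 : (j:ℤ) ≤ K := by exact_mod_cast hj
        nlinarith
      · simp [Nat.sub_eq_zero_of_le hj]
    calc (K - j) * K.descFactorial j * (N ^ j * N)
        = ((K - j) * N) * (K.descFactorial j * N ^ j) := by ring
      _ ≤ ((N - j) * K) * (N.descFactorial j * K ^ j) :=
          Nat.mul_le_mul h1 ih
      _ = (N - j) * N.descFactorial j * (K ^ j * K) := by ring

lemma choose_pow_ineq (K N j : ℕ) (hK : K ≤ N) :
    K.choose j * N ^ j ≤ N.choose j * K ^ j := by
  have h := descFact_ineq K N hK j
  rw [Nat.descFactorial_eq_factorial_mul_choose, Nat.descFactorial_eq_factorial_mul_choose] at h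
  rw [Nat.mul_assoc, Nat.mul_assoc] at h
  exact Nat.le_of_mul_le_mul_left h (Nat.factorial_pos j)

-- Lemma A
lemma sum_choose_filter (K N n j : ℕ) (hK : K ≤ N) (hj : j ≤ n) :
    ∑ k ∈ Finset.range (n + 1), K.choose k * k.choose j * (N - K).choose (n - k)
      = K.choose j * (N - j).choose (n - j) := by
  rcases lt_or_ge K j with hKj | hjK
  · -- j > K : both sides 0
    rw [Nat.choose_eq_zero_of_lt hKj, Nat.zero_mul]
    apply Finset.sum_eq_zero
    intro k hk
    rcases lt_or_ge k j with hkj | hjk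
    · rw [Nat.choose_eq_zero_of_lt hkj]; ring
    · rw [Nat.choose_eq_zero_of_lt (lt_of_lt_of_le hKj hjk), Nat.zero_mul, Nat.zero_mul]
  · -- j ≤ K
    have step1 : ∑ k ∈ Finset.range (n + 1), K.choose k * k.choose j * (N - K).choose (n - k)
        = ∑ k ∈ Finset.Ico j (n + 1), K.choose k * k.choose j * (N - K).choose (n - k) := by
      rw [Finset.range_eq_Ico, ← Finset.sum_Ico_consecutive _ (Nat.zero_le j) (by omega)]
      have : ∑ k ∈ Finset.Ico 0 j, K.choose k * k.choose j * (N - K).choose (n - k) = 0 := by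
        apply Finset.sum_eq_zero
        intro k hk
        rw [Nat.choose_eq_zero_of_lt (Finset.mem_Ico.1 hk).2]; ring
      rw [this, Nat.zero_add]
    rw [step1]
    have step2 : ∀ k ∈ Finset.Ico j (n + 1),
        K.choose k * k.choose j * (N - K).choose (n - k)
        = K.choose j * ((K - j).choose (k - j) * (N - K).choose (n - k)) := by
      intro k hk
      have hjk : j ≤ k := (Finset.mem_Ico.1 hk).1
      rcases le_or_gt k K with hkK | hKk
      · rw [Nat.choose_mul (n := K) hjk]; ring
      · rw [Nat.choose_eq_zero_of_lt hKk,
          Nat.choose_eq_zero_of_lt (by omega : K - j < k - j)]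
        ring
    rw [Finset.sum_congr rfl step2, ← Finset.mul_sum]
    congr 1
    -- reindex k = j + i
    rw [show n + 1 = j + (n - j + 1) by omega]
    rw [Finset.sum_Ico_eq_sum_range]
    have : ∀ i ∈ Finset.range (j + (n - j + 1) - j),
        (K - j).choose (j + i - j) * (N - K).choose (n - (j + i))
        = (K - j).choose i * (N - K).choose (n - j - i) := by
      intro i _
      congr 2 <;> omega
    rw [Finset.sum_congr rfl this]
    -- Vandermonde
    have hv := Nat.add_choose_eq (K - j) (N - K) (n - j)
    rw [Finset.Nat.sum_antidiagonal_eq_sum_range_succ_mk] at hv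
    rw [show K - j + (N - K) = N - j by omega] at hv
    simp only [] at hv
    rw [hv, show j + (n - j + 1) - j = (n-j).succ by omega]

open Real in
lemma mgf_bound (K N n : ℕ) (hK : K ≤ N) (hn : n ≤ N) (hN : 0 < N) (y : ℝ) (hy : 1 ≤ y) :
    ∑ k ∈ Finset.range (n + 1), (K.choose k * (N - K).choose (n - k) : ℝ) * y ^ k
      ≤ (N.choose n : ℝ) * (1 + (K : ℝ) / N * (y - 1)) ^ n := by
  have hy0 : 0 ≤ y - 1 := by linarith
  have hNR : (0:ℝ) < N := by exact_mod_cast hN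
  -- expand y^k
  have expand : ∀ k, y ^ k = ∑ j ∈ Finset.range (k + 1), (k.choose j : ℝ) * (y - 1) ^ j := by
    intro k
    have := add_pow (y - 1) 1 k  -- ∑ (y-1)^i * 1^(k-i) * choose
    simp only [one_pow, mul_one] at this
    rw [show y = (y - 1) + 1 by ring, this]
    exact Finset.sum_congr rfl (fun j _ => by ring)
  have lhs_eq : ∑ k ∈ Finset.range (n + 1), (K.choose k * (N - K).choose (n - k) : ℝ) * y ^ k
      = ∑ j ∈ Finset.range (n + 1),
          (K.choose j * (N - j).choose (n - j) : ℝ) * (y - 1) ^ j := by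
    calc ∑ k ∈ Finset.range (n + 1), (K.choose k * (N - K).choose (n - k) : ℝ) * y ^ k
        = ∑ k ∈ Finset.range (n + 1), ∑ j ∈ Finset.range (n + 1),
            (K.choose k * k.choose j * (N - K).choose (n - k) : ℝ) * (y - 1) ^ j := by
          apply Finset.sum_congr rfl
          intro k hk
          have hkn : k ≤ n := by
            have := Finset.mem_range.1 hk; omega
          rw [expand k, Finset.mul_sum]
          rw [← Finset.sum_range_add_sum_Ico
              (fun j => (K.choose k * k.choose j * (N - K).choose (n - k) : ℝ) * (y - 1) ^ j)
              (by omega : k + 1 ≤ n + 1)]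
          have : ∑ j ∈ Finset.Ico (k+1) (n+1),
              (K.choose k * k.choose j * (N - K).choose (n - k) : ℝ) * (y - 1) ^ j = 0 := by
            apply Finset.sum_eq_zero
            intro j hj
            rw [Nat.choose_eq_zero_of_lt (Finset.mem_Ico.1 hj).1]
            push_cast; ring
          rw [this, add_zero]
          apply Finset.sum_congr rfl
          intro j _
          push_cast; ring
      _ = ∑ j ∈ Finset.range (n + 1), (∑ k ∈ Finset.range (n + 1),
            (K.choose k * k.choose j * (N - K).choose (n - k) : ℕ) : ℝ) * (y - 1) ^ j := by
          rw [Finset.sum_comm]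
          apply Finset.sum_congr rfl
          intro j _
          rw [Finset.sum_mul]
          push_cast
          ring_nf
      _ = _ := by
          apply Finset.sum_congr rfl
          intro j hj
          rw [← Nat.cast_sum,
            sum_choose_filter K N n j hK (by have := Finset.mem_range.1 hj; omega)]
          push_cast; ring
  rw [lhs_eq]
  have rhs_eq : (N.choose n : ℝ) * (1 + (K : ℝ) / N * (y - 1)) ^ n
      = ∑ j ∈ Finset.range (n + 1),
          (N.choose n * n.choose j : ℝ) * ((K : ℝ) / N) ^ j * (y - 1) ^ j := by
    have := add_pow ((K : ℝ) / N * (y - 1)) 1 n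
    simp only [one_pow, mul_one] at this
    rw [show (1 + (K:ℝ) / N * (y - 1)) = ((K:ℝ) / N * (y - 1) + 1) by ring, this,
      Finset.mul_sum]
    exact Finset.sum_congr rfl (fun j _ => by rw [mul_pow]; push_cast; ring)
  rw [rhs_eq]
  apply Finset.sum_le_sum
  intro j hj
  have hjn : j ≤ n := by have := Finset.mem_range.1 hj; omega
  apply mul_le_mul_of_nonneg_right _ (pow_nonneg hy0 j)
  -- C(K,j) C(N-j,n-j) ≤ C(N,n) C(n,j) (K/N)^j
  have hid : N.choose n * n.choose j = N.choose j * (N - j).choose (n - j) :=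
    Nat.choose_mul (n := N) hjn
  rw [div_pow, ← mul_div_assoc, le_div_iff₀ (by positivity)]
  have key : (K.choose j * (N - j).choose (n - j)) * N ^ j
      ≤ (N.choose j * (N - j).choose (n - j)) * K ^ j := by
    calc (K.choose j * (N - j).choose (n - j)) * N ^ j
        = (K.choose j * N ^ j) * (N - j).choose (n - j) := by ring
      _ ≤ (N.choose j * K ^ j) * (N - j).choose (n - j) :=
          Nat.mul_le_mul_right _ (choose_pow_ineq K N j hK)
      _ = (N.choose j * (N - j).choose (n - j)) * K ^ j := by ring
  calc ((K.choose j : ℝ) * (N - j).choose (n - j)) * (N:ℝ) ^ j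
      ≤ ((N.choose j : ℝ) * (N - j).choose (n - j)) * (K:ℝ) ^ j := by exact_mod_cast key
    _ = (N.choose n * n.choose j : ℝ) * (K:ℝ) ^ j := by
        rw [show ((N.choose n : ℝ) * n.choose j) = ((N.choose n * n.choose j : ℕ) : ℝ) by push_cast; ring,
          hid]; push_cast; ring

lemma mgf_bound_le_one (K N n : ℕ) (hK : K ≤ N) (hn : n ≤ N) (hN : 0 < N)
    (x : ℝ) (hx0 : 0 < x) (hx1 : x ≤ 1) :
    ∑ k ∈ Finset.range (n + 1), (K.choose k * (N - K).choose (n - k) : ℝ) * x ^ k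
      ≤ (N.choose n : ℝ) * (1 - (K : ℝ) / N + (K : ℝ) / N * x) ^ n := by
  have hNR : (0:ℝ) < N := by exact_mod_cast hN
  set y : ℝ := x⁻¹ with hydef
  have hy : 1 ≤ y := (one_le_inv₀ hx0).2 hx1
  have reflect := Finset.sum_range_reflect
    (fun k => (K.choose k * (N - K).choose (n - k) : ℝ) * x ^ k) (n + 1)
  have step : ∑ k ∈ Finset.range (n + 1), (K.choose k * (N - K).choose (n - k) : ℝ) * x ^ k
      = x ^ n * ∑ k ∈ Finset.range (n + 1),
          ((N - K).choose k * (N - (N - K)).choose (n - k) : ℝ) * y ^ k := by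
    rw [← reflect, Finset.mul_sum]
    apply Finset.sum_congr rfl
    intro k hk
    have hkn : k ≤ n := by have := Finset.mem_range.1 hk; omega
    have h1 : n + 1 - 1 - k = n - k := by omega
    have h2 : n - (n - k) = k := by omega
    have h3 : N - (N - K) = K := Nat.sub_sub_self hK
    rw [h1, h2, h3]
    have hxnk : x ^ (n - k) = x ^ n * y ^ k := by
      rw [hydef, inv_pow, pow_sub₀ x (ne_of_gt hx0) hkn]
    rw [hxnk]; ring
  rw [step]
  have hb := mgf_bound (N - K) N n (Nat.sub_le N K) hn hN y hy
  calc x ^ n * ∑ k ∈ Finset.range (n + 1),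
          ((N - K).choose k * (N - (N - K)).choose (n - k) : ℝ) * y ^ k
      ≤ x ^ n * ((N.choose n : ℝ) * (1 + ((N - K : ℕ) : ℝ) / N * (y - 1)) ^ n) :=
        mul_le_mul_of_nonneg_left hb (by positivity)
    _ = (N.choose n : ℝ) * (x * (1 + ((N - K : ℕ) : ℝ) / N * (y - 1))) ^ n := by
        rw [mul_pow]; ring
    _ = (N.choose n : ℝ) * (1 - (K : ℝ) / N + (K : ℝ) / N * x) ^ n := by
        congr 2
        rw [Nat.cast_sub hK]
        have hxne : x ≠ 0 := ne_of_gt hx0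
        simp only [hydef]
        field_simp
        ring

end HypergeomAux

/-- Probability mass function of the hypergeometric distribution with
population size `N`, `K` marked items, and `n` draws without replacement. -/
noncomputable def hypergeomPMF (N K n k : ℕ) : ℝ :=
  ((Nat.choose K k : ℝ) * (Nat.choose (N - K) (n - k) : ℝ)) / (Nat.choose N n : ℝ)

/-- Lower tail bound for the hypergeometric distribution:
if `X ~ Hypergeometric(N, K, n)` and `0 < t < K/N`, then
`Pr[X ≤ (K/N − t)·n] ≤ exp(−2 t² n)`. -/
theorem hypergeom_lower_tail (N K n : ℕ) (hK : K ≤ N) (hn : n ≤ N) (t : ℝ)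
    (ht : 0 < t) (ht' : t < (K : ℝ) / (N : ℝ)) :
    ∑ k ∈ Finset.range (n + 1),
        (if (k : ℝ) ≤ ((K : ℝ) / (N : ℝ) - t) * (n : ℝ) then hypergeomPMF N K n k else 0)
      ≤ Real.exp (-2 * t ^ 2 * (n : ℝ)) := by
  have hN : 0 < N := by
    rcases Nat.eq_zero_or_pos N with h | h
    · subst h; simp at ht'; linarith
    · exact h
  have hNR : (0:ℝ) < N := by exact_mod_cast hN
  set p : ℝ := (K : ℝ) / N with hpdef
  have hp0 : 0 ≤ p := by positivity
  have hp1 : p ≤ 1 := by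
    rw [hpdef, div_le_one hNR]; exact_mod_cast hK
  have hCN : (0:ℝ) < (N.choose n : ℝ) := by exact_mod_cast Nat.choose_pos hn
  set lam : ℝ := 4 * t with hlam
  have hlam0 : 0 < lam := by positivity
  set x : ℝ := Real.exp (-lam) with hxdef
  have hx0 : 0 < x := Real.exp_pos _
  have hx1 : x ≤ 1 := Real.exp_le_one_iff.2 (by linarith)
  have hpmf : ∀ k, 0 ≤ hypergeomPMF N K n k := by
    intro k; unfold hypergeomPMF; positivity
  -- Step 1: Chernoff
  have step1 : ∑ k ∈ Finset.range (n + 1),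
        (if (k : ℝ) ≤ (p - t) * (n : ℝ) then hypergeomPMF N K n k else 0)
      ≤ ∑ k ∈ Finset.range (n + 1),
          hypergeomPMF N K n k * (Real.exp (lam * (p - t) * n) * x ^ k) := by
    apply Finset.sum_le_sum
    intro k _
    have hexpk : Real.exp (lam * (p - t) * n) * x ^ k
        = Real.exp (lam * ((p - t) * n - k)) := by
      rw [hxdef, ← Real.exp_nat_mul, ← Real.exp_add]
      congr 1; ring
    split_ifs with hcond
    · rw [hexpk]
      nth_rewrite 1 [← mul_one (hypergeomPMF N K n k)]
      apply mul_le_mul_of_nonneg_left _ (hpmf k)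
      apply Real.one_le_exp
      have h0 : (0:ℝ) ≤ (p - t) * n - k := by linarith
      exact mul_nonneg hlam0.le h0
    · exact mul_nonneg (hpmf k) (by positivity)
  -- Step 2: bound the mgf sum
  have step2 : ∑ k ∈ Finset.range (n + 1),
        hypergeomPMF N K n k * (Real.exp (lam * (p - t) * n) * x ^ k)
      ≤ Real.exp (lam * (p - t) * n) * (1 - p + p * x) ^ n := by
    have expand : ∑ k ∈ Finset.range (n + 1),
          hypergeomPMF N K n k * (Real.exp (lam * (p - t) * n) * x ^ k)
        = (Real.exp (lam * (p - t) * n) / (N.choose n : ℝ)) *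
            ∑ k ∈ Finset.range (n + 1),
              (K.choose k * (N - K).choose (n - k) : ℝ) * x ^ k := by
      rw [Finset.mul_sum]
      apply Finset.sum_congr rfl
      intro k _
      unfold hypergeomPMF
      field_simp
    rw [expand]
    have hb := mgf_bound_le_one K N n hK hn hN x hx0 hx1
    calc (Real.exp (lam * (p - t) * n) / (N.choose n : ℝ)) *
            ∑ k ∈ Finset.range (n + 1),
              (K.choose k * (N - K).choose (n - k) : ℝ) * x ^ k
        ≤ (Real.exp (lam * (p - t) * n) / (N.choose n : ℝ)) *
            ((N.choose n : ℝ) * (1 - p + p * x) ^ n) :=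
          mul_le_mul_of_nonneg_left hb (by positivity)
      _ = Real.exp (lam * (p - t) * n) * (1 - p + p * x) ^ n := by
          field_simp
  -- Step 3: analytic bound
  have base : Real.exp (lam * (p - t)) * (1 - p + p * x) ≤ Real.exp (-2 * t ^ 2) := by
    have hbern := bern_hoeffding p hp0 hp1 (-lam)
    calc Real.exp (lam * (p - t)) * (1 - p + p * x)
        ≤ Real.exp (lam * (p - t)) * Real.exp (p * (-lam) + (-lam) ^ 2 / 8) :=
          mul_le_mul_of_nonneg_left hbern (le_of_lt (Real.exp_pos _))
      _ = Real.exp (lam * (p - t) + (p * (-lam) + (-lam) ^ 2 / 8)) := by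
          rw [← Real.exp_add]
      _ = Real.exp (-2 * t ^ 2) := by
          congr 1; rw [hlam]; ring
  have final : Real.exp (lam * (p - t) * n) * (1 - p + p * x) ^ n
      ≤ Real.exp (-2 * t ^ 2 * n) := by
    have h1 : Real.exp (lam * (p - t) * n) * (1 - p + p * x) ^ n
        = (Real.exp (lam * (p - t)) * (1 - p + p * x)) ^ n := by
      rw [mul_pow, ← Real.exp_nat_mul]
      congr 1; ring
    have h2 : Real.exp (-2 * t ^ 2 * n) = (Real.exp (-2 * t ^ 2)) ^ n := by
      rw [← Real.exp_nat_mul]; congr 1; ring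
    rw [h1, h2]
    apply pow_le_pow_left₀ _ base
    have := bern_pos p hp0 hp1 (-lam)
    positivity
  calc _ ≤ _ := step1
    _ ≤ _ := step2
    _ ≤ _ := final
end

section
/- Let X ~ Hypergeometric(N, K, n) and let λ > nK/N. Then Pr[X ≥ λ] ≤ exp(−2n·(λ/n − K/N)²). -/
open Finset Real

lemma bern_mgf_bound (p : ℝ) (hp0 : 0 ≤ p) (hp1 : p ≤ 1) (t : ℝ) (ht : 0 ≤ t) :
    1 + p * (Real.exp t - 1) ≤ Real.exp (p * t + t ^ 2 / 8) := by
  set D : ℝ → ℝ := fun s => 1 + p * (Real.exp s - 1) with hDdef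
  have hDpos : ∀ s, 0 ≤ s → 0 < D s := by
    intro s hs
    have : 1 ≤ Real.exp s := Real.one_le_exp hs
    have : 0 ≤ p * (Real.exp s - 1) := mul_nonneg hp0 (by linarith)
    simp only [hDdef]; linarith
  have hDderiv : ∀ s, HasDerivAt D (p * Real.exp s) s := by
    intro s
    exact ((Real.hasDerivAt_exp s).sub_const 1).const_mul p |>.const_add 1
  set g : ℝ → ℝ := fun s => p + s / 4 - p * Real.exp s / D s with hgdef
  have hgderiv : ∀ s, 0 ≤ s →
      HasDerivAt g (1 / 4 - (1 - p) * (p * Real.exp s) / (D s) ^ 2) s := by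
    intro s hs
    have hnum : HasDerivAt (fun u => p * Real.exp u) (p * Real.exp s) s :=
      (Real.hasDerivAt_exp s).const_mul p
    have hq : HasDerivAt (fun u => p * Real.exp u / D u)
        ((p * Real.exp s * D s - p * Real.exp s * (p * Real.exp s)) / (D s) ^ 2) s :=
      hnum.div (hDderiv s) (hDpos s hs).ne'
    have h1 : HasDerivAt (fun u => p + u / 4) (1 / 4) s := by
      simpa using (hasDerivAt_id s).div_const 4 |>.const_add p
    have := h1.sub hq
    refine this.congr_deriv ?_
    have : p * Real.exp s * D s - p * Real.exp s * (p * Real.exp s)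
        = (1 - p) * (p * Real.exp s) := by
      simp only [hDdef]; ring
    rw [this]
  have hg0 : g 0 = 0 := by simp [hgdef, hDdef]
  have hgnonneg : ∀ s, 0 ≤ s → 0 ≤ g s := by
    intro s hs
    have hmono : MonotoneOn g (Set.Ici (0:ℝ)) := by
      apply monotoneOn_of_deriv_nonneg (convex_Ici 0)
      · intro x hx
        exact ((hgderiv x hx).continuousAt).continuousWithinAt
      · intro x hx
        rw [interior_Ici] at hx
        exact ((hgderiv x (le_of_lt hx)).differentiableAt).differentiableWithinAt
      · intro x hx
        rw [interior_Ici] at hx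
        rw [(hgderiv x (le_of_lt hx)).deriv]
        have hD := hDpos x (le_of_lt hx)
        have key : (1 - p) * (p * Real.exp x) ≤ (D x) ^ 2 / 4 := by
          have : D x = (1 - p) + p * Real.exp x := by simp only [hDdef]; ring
          rw [this]
          nlinarith [sq_nonneg ((1 - p) - p * Real.exp x)]
        have hD2 : (0:ℝ) < (D x) ^ 2 := pow_pos hD 2
        rw [sub_nonneg, div_le_iff₀ hD2]
        linarith
    have := hmono (Set.self_mem_Ici) (Set.mem_Ici.2 hs) hs
    rw [hg0] at this; exact this
  -- φ
  set φ : ℝ → ℝ := fun s => p * s + s ^ 2 / 8 - Real.log (D s) with hφdef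
  have hφderiv : ∀ s, 0 ≤ s → HasDerivAt φ (g s) s := by
    intro s hs
    have hlog : HasDerivAt (fun u => Real.log (D u)) (p * Real.exp s / D s) s :=
      (hDderiv s).log (hDpos s hs).ne'
    have h1 : HasDerivAt (fun u => p * u + u ^ 2 / 8) (p + 2 * s / 8) s := by
      have := ((hasDerivAt_pow 2 s).div_const 8).const_add 0
      have h2 : HasDerivAt (fun u : ℝ => p * u) p s := by
        simpa using (hasDerivAt_id s).const_mul p
      exact (h2.add ((hasDerivAt_pow 2 s).div_const 8)).congr_deriv (by norm_num)
    have := h1.sub hlog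
    refine this.congr_deriv ?_
    simp only [hgdef]; ring
  have hφ0 : φ 0 = 0 := by simp [hφdef, hDdef]
  have hφt : 0 ≤ φ t := by
    have hmono : MonotoneOn φ (Set.Ici (0:ℝ)) := by
      apply monotoneOn_of_deriv_nonneg (convex_Ici 0)
      · intro x hx
        exact ((hφderiv x hx).continuousAt).continuousWithinAt
      · intro x hx
        rw [interior_Ici] at hx
        exact ((hφderiv x (le_of_lt hx)).differentiableAt).differentiableWithinAt
      · intro x hx
        rw [interior_Ici] at hx
        rw [(hφderiv x (le_of_lt hx)).deriv]
        exact hgnonneg x (le_of_lt hx)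
    have := hmono (Set.self_mem_Ici) (Set.mem_Ici.2 ht) ht
    rw [hφ0] at this; exact this
  have : Real.log (D t) ≤ p * t + t ^ 2 / 8 := by
    simp only [hφdef] at hφt; linarith
  calc D t ≤ Real.exp (Real.log (D t)) := by rw [Real.exp_log (hDpos t ht)]
    _ ≤ Real.exp (p * t + t ^ 2 / 8) := Real.exp_le_exp.2 this

lemma desc_le (K N : ℕ) (hK : K ≤ N) :
    ∀ j, N ^ j * K.descFactorial j ≤ K ^ j * N.descFactorial j := by
  intro j
  induction j with
  | zero => simp
  | succ j ih =>
    rw [Nat.descFactorial_succ, Nat.descFactorial_succ, pow_succ, pow_succ]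
    have key : N * (K - j) ≤ K * (N - j) := by
      rcases Nat.le_total j K with h | h
      · have hjN : j ≤ N := h.trans hK
        zify [h, hjN]
        nlinarith [Nat.mul_le_mul_right j hK]
      · simp [Nat.sub_eq_zero_of_le h]
    calc N ^ j * N * ((K - j) * K.descFactorial j)
        = (N * (K - j)) * (N ^ j * K.descFactorial j) := by ring
      _ ≤ (K * (N - j)) * (K ^ j * N.descFactorial j) :=
          Nat.mul_le_mul key ih
      _ = K ^ j * K * ((N - j) * N.descFactorial j) := by ring

-- key sum identity
lemma key_sum (N K n j : ℕ) (hK : K ≤ N) (hn : n ≤ N) (hj : j ≤ n) :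
    ∑ k ∈ Finset.range (n + 1), K.choose k * k.choose j * (N - K).choose (n - k)
      = K.choose j * (N - j).choose (n - j) := by
  by_cases hjK : j ≤ K
  · -- split the sum
    have h1 : ∀ k ∈ Finset.range j, K.choose k * k.choose j * (N - K).choose (n - k) = 0 := by
      intro k hk
      rw [Finset.mem_range] at hk
      rw [Nat.choose_eq_zero_of_lt hk]; ring
    rw [Finset.range_eq_Ico, ← Finset.sum_Ico_consecutive _ (Nat.zero_le j) (by omega : j ≤ n + 1),
      ← Finset.range_eq_Ico, Finset.sum_eq_zero h1, zero_add,
      Finset.sum_Ico_eq_sum_range]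
    have h2 : ∀ i, K.choose (j + i) * (j + i).choose j = K.choose j * (K - j).choose i := by
      intro i
      by_cases hiK : j + i ≤ K
      · have := Nat.choose_mul (n := K) (Nat.le_add_right j i)
        simpa [Nat.add_sub_cancel_left] using this
      · rw [Nat.choose_eq_zero_of_lt (show K < j + i by omega),
          Nat.choose_eq_zero_of_lt (show K - j < i by omega)]
        ring
    have h3 : ∀ i ∈ Finset.range (n + 1 - j),
        K.choose (j + i) * (j + i).choose j * (N - K).choose (n - (j + i))
          = K.choose j * ((K - j).choose i * (N - K).choose ((n - j) - i)) := by
      intro i _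
      rw [h2 i, Nat.sub_add_eq]
      ring
    rw [Finset.sum_congr rfl h3, ← Finset.mul_sum]
    congr 1
    have hv : (N - j).choose (n - j) = ((K - j) + (N - K)).choose (n - j) := by
      congr 1; omega
    rw [hv, Nat.add_choose_eq, Finset.Nat.sum_antidiagonal_eq_sum_range_succ_mk]
    have : n + 1 - j = (n - j) + 1 := by omega
    rw [this]
  · rw [Nat.choose_eq_zero_of_lt (by omega), zero_mul]
    apply Finset.sum_eq_zero
    intro k hk
    by_cases hkK : k ≤ K
    · rw [Nat.choose_eq_zero_of_lt (show k < j by omega)]; ring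
    · rw [Nat.choose_eq_zero_of_lt (show K < k by omega)]; ring

lemma hypergeom_mgf_le (N K n : ℕ) (hN : 0 < N) (hK : K ≤ N) (hn : n ≤ N)
    (x : ℝ) (hx : 1 ≤ x) :
    ∑ k ∈ Finset.range (n + 1), hypergeomPMF N K n k * x ^ k
      ≤ (1 + (K : ℝ) / N * (x - 1)) ^ n := by
  have hCN : (0:ℝ) < (N.choose n : ℝ) := by exact_mod_cast Nat.choose_pos hn
  have hNR : (0:ℝ) < (N : ℝ) := by exact_mod_cast hN
  -- expand x^k
  have hxk : ∀ k ∈ Finset.range (n + 1),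
      x ^ k = ∑ j ∈ Finset.range (n + 1), (k.choose j : ℝ) * (x - 1) ^ j := by
    intro k hk
    rw [Finset.mem_range] at hk
    have : x ^ k = ((x - 1) + 1) ^ k := by ring_nf
    rw [this, add_pow]
    rw [← Finset.sum_subset (Finset.range_subset_range.2 hk)]
    · apply Finset.sum_congr rfl
      intro j _; ring
    · intro j _ hj
      rw [Finset.mem_range, not_lt] at hj
      rw [Nat.choose_eq_zero_of_lt (by omega)]
      simp
  calc ∑ k ∈ Finset.range (n + 1), hypergeomPMF N K n k * x ^ k
      = ∑ j ∈ Finset.range (n + 1), (x - 1) ^ j *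
          ((K.choose j : ℝ) * ((N - j).choose (n - j) : ℝ) / (N.choose n : ℝ)) := by
        rw [Finset.sum_congr rfl (fun k hk => by rw [hxk k hk, Finset.mul_sum]),
          Finset.sum_comm]
        apply Finset.sum_congr rfl
        intro j hj
        rw [Finset.mem_range] at hj
        have hkR : (K.choose j : ℝ) * ((N - j).choose (n - j) : ℝ)
            = ∑ k ∈ Finset.range (n + 1),
                (K.choose k : ℝ) * (k.choose j : ℝ) * ((N - K).choose (n - k) : ℝ) := by
          have hk := key_sum N K n j hK hn (by omega)
          exact_mod_cast (congrArg (Nat.cast (R := ℝ)) hk).symm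
        rw [hkR, Finset.sum_div, Finset.mul_sum]
        apply Finset.sum_congr rfl
        intro k _
        unfold hypergeomPMF
        push_cast
        ring
    _ ≤ ∑ j ∈ Finset.range (n + 1), ((K : ℝ) / N * (x - 1)) ^ j * 1 ^ (n - j) * (n.choose j : ℝ) := by
        apply Finset.sum_le_sum
        intro j hj
        rw [Finset.mem_range] at hj
        have hxj : (0:ℝ) ≤ (x - 1) ^ j := pow_nonneg (by linarith) j
        have hkey : ((K.choose j : ℝ) * ((N - j).choose (n - j) : ℝ) / (N.choose n : ℝ))
            ≤ ((K : ℝ) / N) ^ j * (n.choose j : ℝ) := by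
          have hnat : N ^ j * (K.choose j * (N - j).choose (n - j))
              ≤ K ^ j * (N.choose n * n.choose j) := by
            have h1 : N ^ j * K.choose j ≤ K ^ j * N.choose j := by
              have := desc_le K N hK j
              rw [Nat.descFactorial_eq_factorial_mul_choose,
                Nat.descFactorial_eq_factorial_mul_choose] at this
              have hfac : 0 < j.factorial := Nat.factorial_pos j
              exact Nat.le_of_mul_le_mul_left (by
                calc j.factorial * (N ^ j * K.choose j) = N ^ j * (j.factorial * K.choose j) := by ring
                  _ ≤ K ^ j * (j.factorial * N.choose j) := this
                  _ = j.factorial * (K ^ j * N.choose j) := by ring) hfac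
            have h2 : N.choose n * n.choose j = N.choose j * (N - j).choose (n - j) :=
              Nat.choose_mul (n := N) (by omega)
            calc N ^ j * (K.choose j * (N - j).choose (n - j))
                = (N ^ j * K.choose j) * (N - j).choose (n - j) := by ring
              _ ≤ (K ^ j * N.choose j) * (N - j).choose (n - j) :=
                  Nat.mul_le_mul_right _ h1
              _ = K ^ j * (N.choose j * (N - j).choose (n - j)) := by ring
              _ = K ^ j * (N.choose n * n.choose j) := by rw [h2]
          have hcast : (N:ℝ) ^ j * ((K.choose j : ℝ) * ((N - j).choose (n - j) : ℝ))
              ≤ (K:ℝ) ^ j * ((N.choose n : ℝ) * (n.choose j : ℝ)) := by exact_mod_cast hnat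
          rw [div_pow, div_mul_eq_mul_div, div_le_div_iff₀ hCN (pow_pos hNR j)]
          nlinarith [hcast]
        calc (x - 1) ^ j * ((K.choose j : ℝ) * ((N - j).choose (n - j) : ℝ) / (N.choose n : ℝ))
            ≤ (x - 1) ^ j * (((K : ℝ) / N) ^ j * (n.choose j : ℝ)) :=
              mul_le_mul_of_nonneg_left hkey hxj
          _ = ((K : ℝ) / N * (x - 1)) ^ j * 1 ^ (n - j) * (n.choose j : ℝ) := by
              rw [mul_pow]; ring
    _ = (1 + (K : ℝ) / N * (x - 1)) ^ n := by
        rw [add_comm (1:ℝ), add_pow]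

/-- Upper tail (Serfling-type) bound for the hypergeometric distribution:
if `X ~ Hypergeometric(N, K, n)` and `λ > nK/N`, then
`Pr[X ≥ λ] ≤ exp(−2n (λ/n − K/N)²)`. -/
theorem hypergeom_upper_tail (N K n : ℕ) (hK : K ≤ N) (hn : n ≤ N) (lam : ℝ)
    (hlam : (n : ℝ) * (K : ℝ) / (N : ℝ) < lam) :
    ∑ k ∈ Finset.range (n + 1),
        (if lam ≤ (k : ℝ) then hypergeomPMF N K n k else 0)
      ≤ Real.exp (-2 * (n : ℝ) * (lam / (n : ℝ) - (K : ℝ) / (N : ℝ)) ^ 2) := by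
  rcases Nat.eq_zero_or_pos n with hn0 | hnpos
  · subst hn0
    simp only [Nat.cast_zero, zero_mul, zero_div] at hlam
    rw [Finset.sum_range_one]
    norm_num [hlam.not_ge]
  · have hN : 0 < N := lt_of_lt_of_le hnpos hn
    have hNR : (0:ℝ) < N := by exact_mod_cast hN
    have hnR : (0:ℝ) < n := by exact_mod_cast hnpos
    set p : ℝ := (K : ℝ) / N with hpdef
    have hp0 : 0 ≤ p := by positivity
    have hp1 : p ≤ 1 := by
      rw [hpdef, div_le_one hNR]; exact_mod_cast hK
    have hd : 0 < lam / n - p := by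
      rw [sub_pos, hpdef, lt_div_iff₀ hnR]
      calc p * n = (n : ℝ) * K / N := by rw [hpdef]; ring
        _ < lam := hlam
    set t : ℝ := 4 * (lam / n - p) with htdef
    have ht : 0 < t := by positivity
    have hpmf : ∀ k, 0 ≤ hypergeomPMF N K n k := by
      intro k; unfold hypergeomPMF; positivity
    have hx1 : (1:ℝ) ≤ Real.exp t := Real.one_le_exp ht.le
    calc ∑ k ∈ Finset.range (n + 1), (if lam ≤ (k : ℝ) then hypergeomPMF N K n k else 0)
        ≤ ∑ k ∈ Finset.range (n + 1), Real.exp (t * ((k : ℝ) - lam)) * hypergeomPMF N K n k := by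
          apply Finset.sum_le_sum
          intro k _
          split_ifs with h
          · nth_rewrite 1 [← one_mul (hypergeomPMF N K n k)]
            apply mul_le_mul_of_nonneg_right _ (hpmf k)
            apply Real.one_le_exp
            have : (0:ℝ) ≤ (k:ℝ) - lam := by linarith
            positivity
          · exact mul_nonneg (Real.exp_nonneg _) (hpmf k)
      _ = Real.exp (-(t * lam)) *
            ∑ k ∈ Finset.range (n + 1), hypergeomPMF N K n k * (Real.exp t) ^ k := by
          rw [Finset.mul_sum]
          apply Finset.sum_congr rfl
          intro k _
          rw [show t * ((k:ℝ) - lam) = (k:ℝ) * t + -(t * lam) by ring, Real.exp_add,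
            Real.exp_nat_mul]
          ring
      _ ≤ Real.exp (-(t * lam)) * (1 + p * (Real.exp t - 1)) ^ n := by
          apply mul_le_mul_of_nonneg_left _ (Real.exp_nonneg _)
          exact hypergeom_mgf_le N K n hN hK hn (Real.exp t) hx1
      _ ≤ Real.exp (-(t * lam)) * (Real.exp (p * t + t ^ 2 / 8)) ^ n := by
          apply mul_le_mul_of_nonneg_left _ (Real.exp_nonneg _)
          apply pow_le_pow_left₀ (by nlinarith) (bern_mgf_bound p hp0 hp1 t ht.le)
      _ = Real.exp (-(t * lam) + n * (p * t + t ^ 2 / 8)) := by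
          rw [← Real.exp_nat_mul, ← Real.exp_add]
      _ ≤ Real.exp (-2 * (n : ℝ) * (lam / (n : ℝ) - (K : ℝ) / (N : ℝ)) ^ 2) := by
          apply Real.exp_le_exp.2
          rw [← hpdef, htdef]
          have hne : (n:ℝ) ≠ 0 := hnR.ne'
          apply le_of_eq
          field_simp
          ring
end
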